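/- arXiv:1611.09582 — 2 statements merged into one kernel-verified Lean document; each statement's English description precedes it below -/
import Mathlib

section
/- For coprime positive integers ℓ₁, ℓ₂ with ℓ₁ℓ₂ cubefree and complex s with Re(s) > 0, the double Dirichlet series ∑_{ℓ₁n = ℓ₂m} τ(n)τ(m)/(nm)^{1/2+s} equals (f(ℓ₁ℓ₂; 1+2s)/(ℓ₁ℓ₂)^{1/2+s}) · ζ(1+2s)⁴/ζ(2+4s), where f(·; w) is the multiplicative function supported on cubefree integers with f(p; w) = 2/(1+p^{-w}) and f(p²; w) = (3−p^{-w})/(1+p^{-w}). -/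
open Complex

/-- The divisor function τ(n). -/
def tau (n : ℕ) : ℕ := n.divisors.card

lemma fact_zero_of_not_mem {x p : ℕ} (hp : p ∉ x.primeFactors) : x.factorization p = 0 := by
  rwa [← Nat.support_factorization, Finsupp.notMem_support_iff] at hp

lemma tau_eq_prod {x : ℕ} (hx : x ≠ 0) {S : Finset ℕ} (hS : x.primeFactors ⊆ S) :
    (tau x : ℕ) = ∏ p ∈ S, (x.factorization p + 1) := by
  rw [tau, Nat.card_divisors hx]
  refine Finset.prod_subset hS fun p _ hp => ?_
  simp [fact_zero_of_not_mem hp]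

lemma tau_mul_mul {l a b : ℕ} (hl : l ≠ 0) (ha : a ≠ 0) (hb : b ≠ 0) (hab : a.Coprime b) :
    tau (l * (a * b)) * tau l = tau (l * a) * tau (l * b) := by
  have hab0 : a * b ≠ 0 := mul_ne_zero ha hb
  have hlab : l * (a * b) ≠ 0 := mul_ne_zero hl hab0
  set S := (l * (a * b)).primeFactors with hSdef
  have h0 : (l * (a * b)).primeFactors ⊆ S := subset_rfl
  have h1 : (l * a).primeFactors ⊆ S :=
    Nat.primeFactors_mono ⟨b, by ring⟩ hlab
  have h2 : (l * b).primeFactors ⊆ S :=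
    Nat.primeFactors_mono ⟨a, by ring⟩ hlab
  have h3 : l.primeFactors ⊆ S := Nat.primeFactors_mono ⟨a * b, rfl⟩ hlab
  rw [tau_eq_prod hlab h0, tau_eq_prod hl h3, tau_eq_prod (mul_ne_zero hl ha) h1,
    tau_eq_prod (mul_ne_zero hl hb) h2, ← Finset.prod_mul_distrib, ← Finset.prod_mul_distrib]
  refine Finset.prod_congr rfl fun p hp => ?_
  have hpp : p.Prime := Nat.prime_of_mem_primeFactors hp
  have key : a.factorization p = 0 ∨ b.factorization p = 0 := by
    by_contra hc
    push_neg at hc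
    have hpa : p ∣ a := Nat.dvd_of_factorization_pos hc.1
    have hpb : p ∣ b := Nat.dvd_of_factorization_pos hc.2
    have : p ∣ Nat.gcd a b := Nat.dvd_gcd hpa hpb
    rw [hab] at this
    exact hpp.one_lt.ne' (Nat.eq_one_of_dvd_one this)
  rw [Nat.factorization_mul hl hab0, Nat.factorization_mul ha hb,
    Nat.factorization_mul hl ha, Nat.factorization_mul hl hb]
  simp only [Finsupp.add_apply, Finsupp.coe_add, Pi.add_apply]
  rcases key with h | h <;> rw [h] <;> ring

lemma tau_mul_pow {l p : ℕ} (hl : l ≠ 0) (hp : p.Prime) (e : ℕ) :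
    tau (l * p ^ e) * (l.factorization p + 1) = tau l * (l.factorization p + e + 1) := by
  have hpe : p ^ e ≠ 0 := pow_ne_zero _ hp.pos.ne'
  have hlpe : l * p ^ e ≠ 0 := mul_ne_zero hl hpe
  set S := (l * p ^ e).primeFactors ∪ {p} with hSdef
  have h0 : (l * p ^ e).primeFactors ⊆ S := Finset.subset_union_left
  have h3 : l.primeFactors ⊆ S :=
    (Nat.primeFactors_mono ⟨p ^ e, rfl⟩ hlpe).trans Finset.subset_union_left
  have hpS : p ∈ S := Finset.mem_union_right _ (Finset.mem_singleton_self p)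
  rw [tau_eq_prod hlpe h0, tau_eq_prod hl h3,
    Finset.prod_eq_mul_prod_sdiff_singleton_of_mem hpS, Finset.prod_eq_mul_prod_sdiff_singleton_of_mem hpS]
  have hmain : ∀ q ∈ S \ {p},
      ((l * p ^ e).factorization q + 1) = (l.factorization q + 1) := by
    intro q hq
    have hqp : q ≠ p := by
      rcases Finset.mem_sdiff.mp hq with ⟨_, h⟩
      simpa using h
    rw [Nat.factorization_mul hl hpe]
    simp only [Finsupp.add_apply, Finsupp.coe_add, Pi.add_apply]
    simp [hp.factorization_pow, Finsupp.single_apply, Ne.symm hqp]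
  have hfp : (l * p ^ e).factorization p = l.factorization p + e := by
    rw [Nat.factorization_mul hl hpe]
    simp [hp.factorization_pow, Finsupp.single_apply]
  rw [Finset.prod_congr rfl hmain, hfp]
  ring


lemma tau_mul_le {l k : ℕ} (hl : l ≠ 0) (hk : k ≠ 0) : tau (l * k) ≤ tau l * tau k := by
  have hlk : l * k ≠ 0 := mul_ne_zero hl hk
  have h3 : l.primeFactors ⊆ (l * k).primeFactors := Nat.primeFactors_mono ⟨k, rfl⟩ hlk
  have h4 : k.primeFactors ⊆ (l * k).primeFactors :=
    Nat.primeFactors_mono ⟨l, mul_comm l k⟩ hlk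
  rw [tau_eq_prod hlk subset_rfl, tau_eq_prod hl h3, tau_eq_prod hk h4,
    ← Finset.prod_mul_distrib]
  refine Finset.prod_le_prod' fun p hp => ?_
  rw [Nat.factorization_mul hl hk]
  simp only [Finsupp.coe_add, Pi.add_apply]
  set A := l.factorization p; set B := k.factorization p
  calc A + B + 1 ≤ A * B + (A + B + 1) := Nat.le_add_left _ _
  _ = (A + 1) * (B + 1) := by ring

/-- τ(k)² is at most the 4-fold divisor count. -/
lemma tau_sq_le {k : ℕ} (hk : k ≠ 0) :
    tau k * tau k ≤ ∑ p ∈ k.divisorsAntidiagonal, tau p.1 * tau p.2 := by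
  have hcard : ∀ p : ℕ × ℕ, tau p.1 * tau p.2 = (p.1.divisors ×ˢ p.2.divisors).card := by
    intro p; rw [Finset.card_product]; rfl
  have hle : (k.divisors ×ˢ k.divisors).card ≤
      (k.divisorsAntidiagonal.sigma fun p => p.1.divisors ×ˢ p.2.divisors).card := by
    refine Finset.card_le_card_of_injOn
      (fun d => ⟨(d.1, k / d.1), (Nat.gcd d.1 d.2, d.2 / Nat.gcd d.1 d.2)⟩) ?_ ?_
    · rintro ⟨d₁, d₂⟩ hd
      rw [Finset.mem_coe, Finset.mem_product] at hd
      obtain ⟨hd₁, hd₂⟩ := hd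
      rw [Nat.mem_divisors] at hd₁ hd₂
      have hd₁0 : d₁ ≠ 0 := by rintro rfl; exact hk (zero_dvd_iff.mp hd₁.1)
      have hd₂0 : d₂ ≠ 0 := by rintro rfl; exact hk (zero_dvd_iff.mp hd₂.1)
      have hg0 : Nat.gcd d₁ d₂ ≠ 0 := Nat.gcd_ne_zero_left hd₁0
      have hgd1 : Nat.gcd d₁ d₂ ∣ d₁ := Nat.gcd_dvd_left _ _
      have hgd2 : Nat.gcd d₁ d₂ ∣ d₂ := Nat.gcd_dvd_right _ _
      refine Finset.mem_sigma.mpr ⟨?_, ?_⟩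
      · exact Nat.mem_divisorsAntidiagonal.mpr ⟨Nat.mul_div_cancel' hd₁.1, hk⟩
      · refine Finset.mem_product.mpr ⟨Nat.mem_divisors.mpr ⟨hgd1, hd₁0⟩, ?_⟩
        refine Nat.mem_divisors.mpr ⟨?_, ?_⟩
        · rw [Nat.dvd_div_iff_mul_dvd hd₁.1]
          have : d₁ * (d₂ / Nat.gcd d₁ d₂) = Nat.lcm d₁ d₂ := by
            rw [Nat.lcm, ← Nat.mul_div_assoc d₁ hgd2]
          rw [this]
          exact Nat.lcm_dvd hd₁.1 hd₂.1
        · intro h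
          apply hk
          have h' : k / d₁ = 0 := h
          have h5 := Nat.div_mul_cancel hd₁.1
          rw [h', zero_mul] at h5
          exact h5.symm
    · rintro ⟨d₁, d₂⟩ hd ⟨e₁, e₂⟩ he hde
      have h1 : d₁ = e₁ := congrArg (fun t => t.fst.fst) hde
      subst h1
      have h2 : Nat.gcd d₁ d₂ = Nat.gcd d₁ e₂ := congrArg (fun t => t.snd.fst) hde
      have h3 : d₂ / Nat.gcd d₁ d₂ = e₂ / Nat.gcd d₁ e₂ := congrArg (fun t => t.snd.snd) hde
      have : d₂ = e₂ := by
        conv_lhs => rw [← Nat.mul_div_cancel' (Nat.gcd_dvd_right d₁ d₂)]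
        conv_rhs => rw [← Nat.mul_div_cancel' (Nat.gcd_dvd_right d₁ e₂)]
        rw [h3, h2]
      simp [this]
  calc tau k * tau k = (k.divisors ×ˢ k.divisors).card := by rw [Finset.card_product]; rfl
  _ ≤ (k.divisorsAntidiagonal.sigma fun p => p.1.divisors ×ˢ p.2.divisors).card := hle
  _ = ∑ p ∈ k.divisorsAntidiagonal, tau p.1 * tau p.2 := by
      rw [Finset.card_sigma]
      exact Finset.sum_congr rfl fun p _ => (hcard p).symm

lemma card_divisorsAntidiagonal' (n : ℕ) : n.divisorsAntidiagonal.card = tau n := by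
  rw [tau, ← Nat.image_fst_divisorsAntidiagonal, Finset.card_image_of_injOn]
  intro p hp q hq h
  rw [Finset.mem_coe, Nat.mem_divisorsAntidiagonal] at hp hq
  have hp1 : p.1 ≠ 0 := by rintro h0; rw [h0, zero_mul] at hp; exact hp.2 hp.1.symm
  refine Prod.ext h (mul_left_cancel₀ hp1 ?_)
  rw [hp.1, h, hq.1]

lemma conv11 {n : ℕ} (hn : n ≠ 0) :
    LSeries.convolution (1 : ℕ → ℂ) 1 n = (tau n : ℂ) := by
  rw [LSeries.convolution_def]
  simp only [Pi.one_apply, one_mul, Finset.sum_const, nsmul_eq_mul, mul_one]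
  rw [card_divisorsAntidiagonal']

lemma conv4_eq {n : ℕ} (hn : n ≠ 0) :
    LSeries.convolution (LSeries.convolution (1 : ℕ → ℂ) 1)
      (LSeries.convolution (1 : ℕ → ℂ) 1) n
    = ((∑ p ∈ n.divisorsAntidiagonal, tau p.1 * tau p.2 : ℕ) : ℂ) := by
  rw [LSeries.convolution_def]
  push_cast
  refine Finset.sum_congr rfl fun p hp => ?_
  rw [conv11 (Nat.left_ne_zero_of_mem_divisorsAntidiagonal hp),
    conv11 (Nat.right_ne_zero_of_mem_divisorsAntidiagonal hp)]

lemma T4_summable {σ : ℝ} (hσ : 1 < σ) :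
    Summable (fun k : ℕ =>
      ((∑ p ∈ k.divisorsAntidiagonal, tau p.1 * tau p.2 : ℕ) : ℝ) / (k : ℝ) ^ σ) := by
  have hσ' : 1 < ((σ : ℂ)).re := by simpa using hσ
  have h1 : LSeriesSummable 1 (σ : ℂ) := LSeriesSummable_one_iff.mpr hσ'
  have h2 := h1.convolution h1
  have h4 := h2.convolution h2
  have key : ∀ k : ℕ, (LSeries.term (LSeries.convolution (LSeries.convolution (1 : ℕ → ℂ) 1)
      (LSeries.convolution (1 : ℕ → ℂ) 1)) (σ : ℂ) k).re
      = ((∑ p ∈ k.divisorsAntidiagonal, tau p.1 * tau p.2 : ℕ) : ℝ) / (k : ℝ) ^ σ := by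
    intro k
    rcases eq_or_ne k 0 with rfl | hk
    · simp [LSeries.term, Real.zero_rpow (by linarith : σ ≠ 0)]
    · rw [LSeries.term_of_ne_zero hk, conv4_eq hk]
      have hden : ((k : ℂ) ^ (σ : ℂ)) = (((k : ℝ) ^ σ : ℝ) : ℂ) := by
        rw [ofReal_cpow (Nat.cast_nonneg k), ofReal_natCast]
      rw [hden, ← ofReal_natCast, ← ofReal_div, ofReal_re]
  have := (h4.mapL Complex.reCLM)
  refine this.congr fun k => ?_
  simpa using key k

section Geom
variable {x : ℂ}

lemma geom_norm_summable (hx : ‖x‖ < 1) : Summable fun e : ℕ => ‖x ^ e‖ := by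
  simp only [norm_pow]
  exact summable_geometric_of_lt_one (norm_nonneg x) hx

lemma normA_summable (hx : ‖x‖ < 1) : Summable fun e : ℕ => ((e : ℝ) + 1) * ‖x‖ ^ e := by
  have h1 : Summable fun e : ℕ => (e : ℝ) ^ 1 * ‖x‖ ^ e :=
    summable_pow_mul_geometric_of_norm_lt_one 1 (by rwa [Real.norm_eq_abs, _root_.abs_of_nonneg (norm_nonneg x)])
  have h2 : Summable fun e : ℕ => ‖x‖ ^ e := summable_geometric_of_lt_one (norm_nonneg x) hx
  refine (h1.add h2).congr fun e => ?_
  ring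

lemma normB_summable (hx : ‖x‖ < 1) :
    Summable fun e : ℕ => ((e : ℝ) + 1) * ((e : ℝ) + 2) * ‖x‖ ^ e := by
  have hr : ‖(‖x‖)‖ < 1 := by rwa [Real.norm_eq_abs, _root_.abs_of_nonneg (norm_nonneg x)]
  have h1 : Summable fun e : ℕ => (e : ℝ) ^ 2 * ‖x‖ ^ e :=
    summable_pow_mul_geometric_of_norm_lt_one 2 hr
  have h2 : Summable fun e : ℕ => (e : ℝ) ^ 1 * ‖x‖ ^ e :=
    summable_pow_mul_geometric_of_norm_lt_one 1 hr
  have h3 : Summable fun e : ℕ => ‖x‖ ^ e := summable_geometric_of_lt_one (norm_nonneg x) hx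
  refine ((h1.add (h2.mul_left 3)).add (h3.mul_left 2)).congr fun e => ?_
  ring

lemma normA_eq (e : ℕ) : ‖((e : ℂ) + 1) * x ^ e‖ = ((e : ℝ) + 1) * ‖x‖ ^ e := by
  rw [norm_mul, norm_pow]
  congr 1
  rw [show ((e : ℂ) + 1) = ((e + 1 : ℕ) : ℂ) by push_cast; ring, Complex.norm_natCast]
  push_cast; ring

lemma A_norm_summable (hx : ‖x‖ < 1) : Summable fun e : ℕ => ‖((e : ℂ) + 1) * x ^ e‖ :=
  (normA_summable hx).congr fun e => (normA_eq e).symm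

lemma A_summable (hx : ‖x‖ < 1) : Summable fun e : ℕ => ((e : ℂ) + 1) * x ^ e :=
  (A_norm_summable hx).of_norm

lemma B_summable (hx : ‖x‖ < 1) :
    Summable fun e : ℕ => ((e : ℂ) + 1) * ((e : ℂ) + 2) * x ^ e := by
  refine Summable.of_norm ?_
  refine (normB_summable hx).congr fun e => ?_
  rw [norm_mul, norm_mul, norm_pow]
  rw [show ((e : ℂ) + 1) = ((e + 1 : ℕ) : ℂ) by push_cast; ring, Complex.norm_natCast]
  rw [show ((e : ℂ) + 2) = ((e + 2 : ℕ) : ℂ) by push_cast; ring, Complex.norm_natCast]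
  push_cast; ring

lemma tsum_geom (hx : ‖x‖ < 1) : ∑' e : ℕ, x ^ e = (1 - x)⁻¹ :=
  (hasSum_geometric_of_norm_lt_one hx).tsum_eq

lemma tsum_A (hx : ‖x‖ < 1) :
    ∑' e : ℕ, ((e : ℂ) + 1) * x ^ e = ((1 - x)⁻¹) ^ 2 := by
  have h := tsum_mul_tsum_eq_tsum_sum_antidiagonal_of_summable_norm
    (geom_norm_summable hx) (geom_norm_summable hx)
  rw [tsum_geom hx] at h
  have inner : ∀ n : ℕ, ∑ kl ∈ Finset.HasAntidiagonal.antidiagonal n, x ^ kl.1 * x ^ kl.2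
      = ((n : ℂ) + 1) * x ^ n := by
    intro n
    have hc : ∀ kl ∈ Finset.HasAntidiagonal.antidiagonal n, x ^ kl.1 * x ^ kl.2 = x ^ n := by
      intro kl hkl
      rw [← pow_add, Finset.HasAntidiagonal.mem_antidiagonal.mp hkl]
    rw [Finset.sum_congr rfl hc, Finset.sum_const, Finset.Nat.card_antidiagonal, nsmul_eq_mul]
    push_cast; ring
  rw [tsum_congr inner] at h
  rw [← h]; ring

lemma sum_range_cast (n : ℕ) :
    ∑ k ∈ Finset.range (n + 1), ((k : ℂ) + 1) = ((n : ℂ) + 1) * ((n : ℂ) + 2) / 2 := by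
  induction n with
  | zero => norm_num
  | succ n ih =>
    rw [Finset.sum_range_succ, ih]
    push_cast; ring

lemma tsum_B (hx : ‖x‖ < 1) :
    ∑' e : ℕ, ((e : ℂ) + 1) * ((e : ℂ) + 2) * x ^ e = 2 * ((1 - x)⁻¹) ^ 3 := by
  have h := tsum_mul_tsum_eq_tsum_sum_antidiagonal_of_summable_norm
    (A_norm_summable hx) (geom_norm_summable hx)
  rw [tsum_geom hx, tsum_A hx] at h
  have inner : ∀ n : ℕ, ∑ kl ∈ Finset.HasAntidiagonal.antidiagonal n, ((kl.1 : ℂ) + 1) * x ^ kl.1 * x ^ kl.2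
      = ((n : ℂ) + 1) * ((n : ℂ) + 2) / 2 * x ^ n := by
    intro n
    rw [Finset.Nat.sum_antidiagonal_eq_sum_range_succ_mk]
    have hc : ∀ k ∈ Finset.range (n + 1), ((k : ℂ) + 1) * x ^ k * x ^ (n - k)
        = ((k : ℂ) + 1) * x ^ n := by
      intro k hk
      rw [mul_assoc, ← pow_add, Nat.add_sub_cancel' (Nat.lt_succ_iff.mp (Finset.mem_range.mp hk))]
    rw [Finset.sum_congr rfl hc, ← Finset.sum_mul, sum_range_cast]
  rw [tsum_congr inner] at h
  have h2 : (2 : ℂ) * ∑' n : ℕ, ((n : ℂ) + 1) * ((n : ℂ) + 2) / 2 * x ^ n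
      = ∑' n : ℕ, ((n : ℂ) + 1) * ((n : ℂ) + 2) * x ^ n := by
    rw [← tsum_mul_left]
    exact tsum_congr fun n => by ring
  rw [← h2, ← h]; ring

end Geom

lemma tau_pos {n : ℕ} (hn : n ≠ 0) : 0 < tau n := by
  rw [tau, Finset.card_pos]
  exact ⟨1, Nat.one_mem_divisors.mpr hn⟩

lemma cpow_ne_zero' {x : ℂ} (hx : x ≠ 0) (y : ℂ) : x ^ y ≠ 0 := by
  rw [Complex.cpow_def_of_ne_zero hx]
  exact Complex.exp_ne_zero _

lemma natCast_mul_cpow (m n : ℕ) (y : ℂ) :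
    ((m * n : ℕ) : ℂ) ^ y = ((m : ℕ) : ℂ) ^ y * ((n : ℕ) : ℂ) ^ y := by
  have h := mul_cpow_ofReal_nonneg (Nat.cast_nonneg m : (0:ℝ) ≤ (m:ℝ))
    (Nat.cast_nonneg n : (0:ℝ) ≤ (n:ℝ)) y
  rw [show ((m * n : ℕ) : ℂ) = ((m : ℝ) : ℂ) * ((n : ℝ) : ℂ) by push_cast; ring, h]
  norm_cast

lemma natCast_pow_cpow (p e : ℕ) (y : ℂ) :
    ((p ^ e : ℕ) : ℂ) ^ y = (((p : ℕ) : ℂ) ^ y) ^ e := by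
  induction e with
  | zero => simp [Complex.one_cpow]
  | succ e ih =>
    rw [pow_succ, natCast_mul_cpow, ih, pow_succ]

lemma norm_natCast_cpow_neg {k : ℕ} (hk : k ≠ 0) (w : ℂ) :
    ‖(k : ℂ) ^ (-w)‖ = ((k : ℝ) ^ w.re)⁻¹ := by
  have hk0 : (0 : ℝ) < (k : ℝ) := by positivity
  rw [show ((k : ℂ)) = (((k : ℝ)) : ℂ) by push_cast; rfl, 
    Complex.norm_cpow_eq_rpow_re_of_pos hk0, Complex.neg_re, Real.rpow_neg hk0.le]

lemma hasProd_inv_of_ne_zero {ι : Type*} {f : ι → ℂ} {a : ℂ} (h : HasProd f a) (ha : a ≠ 0) :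
    HasProd (fun i => (f i)⁻¹) a⁻¹ := by
  have h2 := Filter.Tendsto.inv₀ h ha
  refine h2.congr fun s => ?_
  rw [Finset.prod_inv_distrib]

section Main

open Nat in
/-- Core identity: the Dirichlet series of `τ(ℓ₂k)τ(ℓ₁k)` at `w`. -/
lemma core_series (ℓ₁ ℓ₂ : ℕ) (hℓ₁ : 0 < ℓ₁) (hℓ₂ : 0 < ℓ₂)
    (hcop : Nat.Coprime ℓ₁ ℓ₂)
    (hcube : ∀ p : ℕ, p.Prime → ¬ p ^ 3 ∣ ℓ₁ * ℓ₂)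
    (w : ℂ) (hwre : 1 < w.re)
    (f : ℕ → ℂ → ℂ)
    (hf1 : ∀ w : ℂ, f 1 w = 1)
    (hfmul : ∀ m n : ℕ, Nat.Coprime m n → ∀ w : ℂ, f (m * n) w = f m w * f n w)
    (hfp : ∀ p : ℕ, p.Prime → ∀ w : ℂ, f p w = 2 / (1 + (p : ℂ) ^ (-w)))
    (hfp2 : ∀ p : ℕ, p.Prime → ∀ w : ℂ,
      f (p ^ 2) w = (3 - (p : ℂ) ^ (-w)) / (1 + (p : ℂ) ^ (-w))) :
    ((tau ℓ₂ * tau ℓ₁ : ℕ) : ℂ) *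
      ∑' k : ℕ, (if k = 0 then 0 else
        ((tau (ℓ₂ * k) * tau (ℓ₁ * k) : ℕ) : ℂ) / ((tau ℓ₂ * tau ℓ₁ : ℕ) : ℂ) * (k : ℂ) ^ (-w))
    = f (ℓ₁ * ℓ₂) w * (riemannZeta w) ^ 4 * (riemannZeta (2 * w))⁻¹ := by
  have hl1 : ℓ₁ ≠ 0 := hℓ₁.ne'
  have hl2 : ℓ₂ ≠ 0 := hℓ₂.ne'
  set L := ℓ₁ * ℓ₂ with hLdef
  have hL0 : L ≠ 0 := mul_ne_zero hl1 hl2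
  set c : ℕ → ℕ := fun k => tau (ℓ₂ * k) * tau (ℓ₁ * k) with hcdef
  have hc1 : c 1 = tau ℓ₂ * tau ℓ₁ := by simp [hcdef]
  have hc1pos : 0 < c 1 := by
    rw [hc1]; exact Nat.mul_pos (tau_pos hl2) (tau_pos hl1)
  have hc1C : ((c 1 : ℕ) : ℂ) ≠ 0 := Nat.cast_ne_zero.mpr hc1pos.ne'
  set F : ℕ → ℂ := fun k => if k = 0 then 0 else
      ((c k : ℕ) : ℂ) / ((c 1 : ℕ) : ℂ) * (k : ℂ) ^ (-w) with hFdef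
  -- `c` is essentially multiplicative
  have hcmul : ∀ m n : ℕ, m ≠ 0 → n ≠ 0 → Nat.Coprime m n →
      c (m * n) * c 1 = c m * c n := by
    intro m n hm hn hmn
    have h2 := tau_mul_mul hl2 hm hn hmn
    have h1 := tau_mul_mul hl1 hm hn hmn
    simp only [hcdef, mul_one]
    calc tau (ℓ₂ * (m * n)) * tau (ℓ₁ * (m * n)) * (tau ℓ₂ * tau ℓ₁)
        = (tau (ℓ₂ * (m * n)) * tau ℓ₂) * (tau (ℓ₁ * (m * n)) * tau ℓ₁) := by ring
      _ = (tau (ℓ₂ * m) * tau (ℓ₂ * n)) * (tau (ℓ₁ * m) * tau (ℓ₁ * n)) := by rw [h1, h2]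
      _ = tau (ℓ₂ * m) * tau (ℓ₁ * m) * (tau (ℓ₂ * n) * tau (ℓ₁ * n)) := by ring
  have hF1 : F 1 = 1 := by
    simp only [hFdef, if_neg one_ne_zero]
    rw [div_self hc1C, Nat.cast_one, Complex.one_cpow, one_mul]
  have hF0 : F 0 = 0 := by simp [hFdef]
  have hFmul : ∀ {m n : ℕ}, Nat.Coprime m n → F (m * n) = F m * F n := by
    intro m n hmn
    rcases eq_or_ne m 0 with rfl | hm
    · have : n = 1 := by simpa using hmn
      subst this
      simp [hF0, hF1]
    rcases eq_or_ne n 0 with rfl | hn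
    · have : m = 1 := by simpa [Nat.coprime_zero_right] using hmn
      subst this
      simp [hF0, hF1]
    have hmn0 : m * n ≠ 0 := mul_ne_zero hm hn
    simp only [hFdef, if_neg hm, if_neg hn, if_neg hmn0]
    have hcast : ((c (m * n) : ℕ) : ℂ) * ((c 1 : ℕ) : ℂ) = ((c m : ℕ) : ℂ) * ((c n : ℕ) : ℂ) := by
      rw [← Nat.cast_mul, ← Nat.cast_mul, hcmul m n hm hn hmn]
    have hdiv : ((c (m * n) : ℕ) : ℂ) / ((c 1 : ℕ) : ℂ)
        = ((c m : ℕ) : ℂ) / ((c 1 : ℕ) : ℂ) * (((c n : ℕ) : ℂ) / ((c 1 : ℕ) : ℂ)) := by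
      field_simp
      linear_combination hcast
    rw [natCast_mul_cpow, hdiv]
    ring
  -- Summability
  have hFnorm : Summable (fun k => ‖F k‖) := by
    have hσ : (1 : ℝ) < w.re := hwre
    refine Summable.of_nonneg_of_le (fun k => norm_nonneg _) ?_ (T4_summable hσ)
    intro k
    rcases eq_or_ne k 0 with rfl | hk
    · rw [hF0, norm_zero]
      positivity
    have hkpos : (0:ℝ) < (k:ℝ) := by positivity
    have hbound : (c k : ℝ) ≤ (c 1 : ℝ) *
        ((∑ p ∈ k.divisorsAntidiagonal, tau p.1 * tau p.2 : ℕ) : ℝ) := by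
      have h1 : c k ≤ c 1 * (tau k * tau k) := by
        have ha := tau_mul_le hl2 hk
        have hb := tau_mul_le hl1 hk
        calc c k = tau (ℓ₂ * k) * tau (ℓ₁ * k) := rfl
        _ ≤ (tau ℓ₂ * tau k) * (tau ℓ₁ * tau k) := Nat.mul_le_mul ha hb
        _ = c 1 * (tau k * tau k) := by rw [hc1]; ring
      have h2 : tau k * tau k ≤ ∑ p ∈ k.divisorsAntidiagonal, tau p.1 * tau p.2 := tau_sq_le hk
      have := h1.trans (Nat.mul_le_mul_left (c 1) h2)
      exact_mod_cast this
    simp only [hFdef, if_neg hk]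
    rw [norm_mul, norm_div, Complex.norm_natCast, Complex.norm_natCast,
      norm_natCast_cpow_neg hk]
    have h1 : (c k : ℝ) / (c 1 : ℝ)
        ≤ ((∑ p ∈ k.divisorsAntidiagonal, tau p.1 * tau p.2 : ℕ) : ℝ) := by
      rw [div_le_iff₀ (show (0:ℝ) < (c 1 : ℝ) by exact_mod_cast hc1pos)]
      calc (c k : ℝ) ≤ (c 1 : ℝ) * _ := hbound
      _ = _ := mul_comm _ _
    calc (c k : ℝ) / (c 1 : ℝ) * ((k:ℝ) ^ w.re)⁻¹
        ≤ ((∑ p ∈ k.divisorsAntidiagonal, tau p.1 * tau p.2 : ℕ) : ℝ) * ((k:ℝ) ^ w.re)⁻¹ := by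
          gcongr
    _ = _ := by rw [div_eq_mul_inv]
  -- rewrite goal in terms of F
  have hrw : (∑' k : ℕ, (if k = 0 then 0 else
      ((tau (ℓ₂ * k) * tau (ℓ₁ * k) : ℕ) : ℂ) / ((tau ℓ₂ * tau ℓ₁ : ℕ) : ℂ) * (k : ℂ) ^ (-w)))
      = ∑' k, F k := by
    refine tsum_congr fun k => ?_
    simp only [hFdef, hcdef, mul_one]
  rw [hrw, show ((tau ℓ₂ * tau ℓ₁ : ℕ) : ℂ) = ((c 1 : ℕ) : ℂ) by rw [hc1]]
  have hdisj : ∀ a : ℕ, a.Prime → ℓ₁.factorization a = 0 ∨ ℓ₂.factorization a = 0 := by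
    intro a hpa
    by_contra hc'
    push_neg at hc'
    have h1 : a ∣ ℓ₁ := Nat.dvd_of_factorization_pos hc'.1
    have h2 : a ∣ ℓ₂ := Nat.dvd_of_factorization_pos hc'.2
    have hg : Nat.gcd ℓ₁ ℓ₂ = 1 := hcop
    have hd1 : a ∣ 1 := hg ▸ Nat.dvd_gcd h1 h2
    exact hpa.one_lt.ne' (Nat.eq_one_of_dvd_one hd1)
  have hEuler := EulerProduct.eulerProduct_hasProd hF1 hFmul hFnorm hF0
  set x : Nat.Primes → ℂ := fun p => ((p : ℕ) : ℂ) ^ (-w) with hxdef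
  set q : Nat.Primes → ℂ := fun p => f ((p : ℕ) ^ (L.factorization (p : ℕ))) w /
      ((L.factorization (p : ℕ) : ℂ) + 1) with hqdef
  have hxnorm : ∀ p : Nat.Primes, ‖x p‖ < 1 := by
    intro p
    have hp2 : 2 ≤ (p : ℕ) := p.2.two_le
    have hp0 : (p : ℕ) ≠ 0 := by omega
    rw [hxdef]
    simp only
    rw [norm_natCast_cpow_neg hp0]
    have h1 : (1 : ℝ) < ((p : ℕ) : ℝ) ^ w.re := by
      refine (Real.one_lt_rpow_iff_of_pos (by positivity)).mpr (Or.inl ⟨?_, by linarith⟩)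
      exact_mod_cast by omega
    exact inv_lt_one_of_one_lt₀ h1
  -- Local factor computation
  have hlocal : ∀ p : Nat.Primes, (∑' e : ℕ, F ((p : ℕ) ^ e))
      = q p * ((1 - x p)⁻¹ * (1 - x p)⁻¹ * ((1 - x p)⁻¹ * (1 - x p)⁻¹)) * (1 - x p ^ 2) := by
    intro p
    have hp : Nat.Prime (p : ℕ) := p.2
    have hp0 : (p : ℕ) ≠ 0 := hp.pos.ne'
    have hxlt : ‖x p‖ < 1 := hxnorm p
    have hsub : (1 : ℂ) - x p ≠ 0 := by
      intro h
      have hx1 : x p = 1 := by linear_combination -h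
      rw [hx1] at hxlt
      simp at hxlt
    have hadd : (1 : ℂ) + x p ≠ 0 := by
      intro h
      have hx1 : x p = -1 := by linear_combination h
      rw [hx1] at hxlt
      simp at hxlt
    set v1 := ℓ₁.factorization (p : ℕ) with hv1
    set v2 := ℓ₂.factorization (p : ℕ) with hv2
    set v := L.factorization (p : ℕ) with hv
    have hvsum : v = v1 + v2 := by
      rw [hv, hLdef, Nat.factorization_mul hl1 hl2]
      simp
      rfl
    have hv12 : v1 = 0 ∨ v2 = 0 := hdisj _ hp
    have hvle : v ≤ 2 := by
      by_contra hgt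
      push_neg at hgt
      exact hcube (p : ℕ) hp ((Nat.Prime.pow_dvd_iff_le_factorization hp hL0).mpr hgt)
    have hvC : ((v : ℂ) + 1) ≠ 0 := Nat.cast_add_one_ne_zero v
    have hgam : ∀ e : ℕ, ((c ((p : ℕ) ^ e) : ℕ) : ℂ) / ((c 1 : ℕ) : ℂ)
        = ((v : ℂ) + (e : ℂ) + 1) * ((e : ℂ) + 1) / ((v : ℂ) + 1) := by
      intro e
      have hNat : c ((p : ℕ) ^ e) * ((v2 + 1) * (v1 + 1))
          = c 1 * ((v2 + e + 1) * (v1 + e + 1)) := by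
        have h2 := tau_mul_pow hl2 hp e
        have h1 := tau_mul_pow hl1 hp e
        simp only [hcdef, mul_one]
        calc tau (ℓ₂ * (p : ℕ) ^ e) * tau (ℓ₁ * (p : ℕ) ^ e) * ((v2 + 1) * (v1 + 1))
            = (tau (ℓ₂ * (p : ℕ) ^ e) * (v2 + 1)) * (tau (ℓ₁ * (p : ℕ) ^ e) * (v1 + 1)) := by
              ring
          _ = (tau ℓ₂ * (v2 + e + 1)) * (tau ℓ₁ * (v1 + e + 1)) := by rw [h2, h1]
          _ = tau ℓ₂ * tau ℓ₁ * ((v2 + e + 1) * (v1 + e + 1)) := by ring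
      have hC : ((c ((p : ℕ) ^ e) : ℕ) : ℂ) * (((v2 : ℂ) + 1) * ((v1 : ℂ) + 1))
          = ((c 1 : ℕ) : ℂ) * (((v2 : ℂ) + (e : ℂ) + 1) * ((v1 : ℂ) + (e : ℂ) + 1)) := by
        exact_mod_cast hNat
      rw [div_eq_div_iff hc1C hvC]
      rcases hv12 with h0 | h0
      · have hvv : v = v2 := by omega
        rw [h0] at hC
        rw [hvv]
        push_cast at hC ⊢
        linear_combination hC
      · have hvv : v = v1 := by omega
        rw [h0] at hC
        rw [hvv]
        push_cast at hC ⊢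
        linear_combination hC
    have hFpe : ∀ e : ℕ, F ((p : ℕ) ^ e)
        = ((v : ℂ) + (e : ℂ) + 1) * ((e : ℂ) + 1) / ((v : ℂ) + 1) * (x p) ^ e := by
      intro e
      have hne : (p : ℕ) ^ e ≠ 0 := pow_ne_zero _ hp0
      simp only [hFdef, if_neg hne]
      rw [natCast_pow_cpow, hgam e]
    rw [tsum_congr hFpe]
    have hqp : q p = f ((p : ℕ) ^ v) w / ((v : ℂ) + 1) := by
      rw [hqdef]
    have hv3 : v = 0 ∨ v = 1 ∨ v = 2 := by omega
    rcases hv3 with h | h | h <;> rw [h] at hqp ⊢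
    · -- v = 0
      have hcongr : ∀ e : ℕ, (((0 : ℕ) : ℂ) + (e : ℂ) + 1) * ((e : ℂ) + 1) / (((0 : ℕ) : ℂ) + 1)
            * (x p) ^ e
          = ((e : ℂ) + 1) * ((e : ℂ) + 2) * (x p) ^ e - ((e : ℂ) + 1) * (x p) ^ e := by
        intro e
        push_cast
        ring
      rw [tsum_congr hcongr, Summable.tsum_sub (B_summable hxlt) (A_summable hxlt),
        tsum_B hxlt, tsum_A hxlt]
      rw [pow_zero, hf1] at hqp
      rw [hqp]
      push_cast
      field_simp
      ring
    · -- v = 1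
      have hcongr : ∀ e : ℕ, (((1 : ℕ) : ℂ) + (e : ℂ) + 1) * ((e : ℂ) + 1) / (((1 : ℕ) : ℂ) + 1)
            * (x p) ^ e
          = ((e : ℂ) + 1) * ((e : ℂ) + 2) * (x p) ^ e / 2 := by
        intro e
        push_cast
        ring
      rw [tsum_congr hcongr, tsum_div_const, tsum_B hxlt]
      rw [pow_one, hfp (p : ℕ) hp w] at hqp
      rw [show ((p : ℕ) : ℂ) ^ (-w) = x p from rfl] at hqp
      rw [hqp]
      push_cast
      field_simp
      ring
    · -- v = 2
      have hcongr : ∀ e : ℕ, (((2 : ℕ) : ℂ) + (e : ℂ) + 1) * ((e : ℂ) + 1) / (((2 : ℕ) : ℂ) + 1)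
            * (x p) ^ e
          = (((e : ℂ) + 1) * ((e : ℂ) + 2) * (x p) ^ e + ((e : ℂ) + 1) * (x p) ^ e) / 3 := by
        intro e
        push_cast
        ring
      rw [tsum_congr hcongr, tsum_div_const, Summable.tsum_add (B_summable hxlt) (A_summable hxlt),
        tsum_B hxlt, tsum_A hxlt]
      rw [hfp2 (p : ℕ) hp w] at hqp
      rw [show ((p : ℕ) : ℂ) ^ (-w) = x p from rfl] at hqp
      rw [hqp]
      push_cast
      field_simp
      ring
  -- Zeta Euler products
  have hw2 : 1 < (2 * w).re := by
    have : (2 * w).re = 2 * w.re := by simp [Complex.mul_re]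
    rw [this]
    linarith
  have hZ1 : HasProd (fun p : Nat.Primes => (1 - x p)⁻¹) (riemannZeta w) :=
    riemannZeta_eulerProduct_hasProd hwre
  have hZ2 := riemannZeta_eulerProduct_hasProd hw2
  have hzeta2ne : riemannZeta (2 * w) ≠ 0 := riemannZeta_ne_zero_of_one_lt_re hw2
  have hZ2' : HasProd (fun p : Nat.Primes => 1 - x p ^ 2) (riemannZeta (2 * w))⁻¹ := by
    have h := hasProd_inv_of_ne_zero hZ2 hzeta2ne
    have hfun : (fun p : Nat.Primes => ((1 - ((p : ℕ) : ℂ) ^ (-(2 * w)))⁻¹)⁻¹)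
        = fun p : Nat.Primes => 1 - x p ^ 2 := by
      funext p
      rw [inv_inv]
      congr 1
      have hp0 : ((p : ℕ) : ℂ) ≠ 0 := Nat.cast_ne_zero.mpr p.2.pos.ne'
      rw [hxdef]
      simp only
      rw [sq, ← Complex.cpow_add _ _ hp0]
      congr 1
      ring
    rwa [hfun] at h
  have hZ4 := (hZ1.mul hZ1).mul (hZ1.mul hZ1)
  set T : Finset Nat.Primes := L.primeFactors.attach.map
    ⟨fun q => ⟨q.1, Nat.prime_of_mem_primeFactors q.2⟩,
     fun a b hab => by
      have h' := congrArg Subtype.val hab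
      exact Subtype.ext h'⟩ with hTdef
  have hmemT : ∀ p : Nat.Primes, p ∈ T ↔ (p : ℕ) ∈ L.primeFactors := by
    intro p
    simp only [hTdef, Finset.mem_map, Finset.mem_attach, true_and,
      Function.Embedding.coeFn_mk]
    constructor
    · rintro ⟨a, ha⟩
      rw [← ha]
      exact a.2
    · intro h
      exact ⟨⟨(p : ℕ), h⟩, Subtype.ext rfl⟩
  have hqone : ∀ p : Nat.Primes, p ∉ T → q p = 1 := by
    intro p hpT
    rw [hmemT] at hpT
    rw [hqdef]
    simp only
    rw [fact_zero_of_not_mem hpT, pow_zero, hf1]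
    norm_num
  have hQ : HasProd q (∏ p ∈ T, q p) := hasProd_prod_of_ne_finset_one hqone
  have hTot := (hQ.mul hZ4).mul hZ2'
  have hfun2 : (fun p : Nat.Primes => ∑' e : ℕ, F ((p : ℕ) ^ e))
      = fun p : Nat.Primes => q p * ((1 - x p)⁻¹ * (1 - x p)⁻¹ *
          ((1 - x p)⁻¹ * (1 - x p)⁻¹)) * (1 - x p ^ 2) := by
    funext p
    exact hlocal p
  rw [hfun2] at hEuler
  have hval := hEuler.unique hTot
  rw [hval]
  -- finite product identification
  have hfact : f L w = ∏ a ∈ L.primeFactors, f (a ^ L.factorization a) w := by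
    have h := Nat.multiplicative_factorization (fun n => f n w)
      (fun u v huv => hfmul u v huv w) (hf1 w) hL0
    rw [Finsupp.prod] at h
    exact h
  have hc1prod : ((c 1 : ℕ) : ℂ) = ∏ a ∈ L.primeFactors, ((L.factorization a : ℂ) + 1) := by
    have h2 : tau ℓ₂ = ∏ a ∈ L.primeFactors, (ℓ₂.factorization a + 1) :=
      tau_eq_prod hl2 (Nat.primeFactors_mono ⟨ℓ₁, mul_comm ℓ₁ ℓ₂⟩ hL0)
    have h1 : tau ℓ₁ = ∏ a ∈ L.primeFactors, (ℓ₁.factorization a + 1) :=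
      tau_eq_prod hl1 (Nat.primeFactors_mono ⟨ℓ₂, rfl⟩ hL0)
    have hkey : c 1 = ∏ a ∈ L.primeFactors, (L.factorization a + 1) := by
      rw [hc1, h1, h2, ← Finset.prod_mul_distrib]
      refine Finset.prod_congr rfl fun a ha => ?_
      have hpa := Nat.prime_of_mem_primeFactors ha
      have hvs : L.factorization a = ℓ₁.factorization a + ℓ₂.factorization a := by
        rw [hLdef, Nat.factorization_mul hl1 hl2]
        simp
      rcases hdisj a hpa with h0 | h0 <;> rw [hvs, h0] <;> ring
    rw [hkey]
    push_cast
    rfl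
  have hfL : ((c 1 : ℕ) : ℂ) * ∏ p ∈ T, q p = f L w := by
    have hTprod : (∏ p ∈ T, q p) = ∏ a ∈ L.primeFactors,
        (f (a ^ L.factorization a) w / ((L.factorization a : ℂ) + 1)) := by
      rw [hTdef, Finset.prod_map]
      exact Finset.prod_attach L.primeFactors (fun n => f (n ^ L.factorization n) w / ((L.factorization n : ℂ) + 1))
    rw [hTprod, hc1prod, ← Finset.prod_mul_distrib, hfact]
    refine Finset.prod_congr rfl fun a ha => ?_
    have hne : ((L.factorization a : ℂ) + 1) ≠ 0 := Nat.cast_add_one_ne_zero (L.factorization a)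
    field_simp
  rw [← hfL]
  ring


end Main


/-- For coprime `ℓ₁, ℓ₂` with `ℓ₁ℓ₂` cubefree and `Re s > 0`, the double Dirichlet
series `∑_{ℓ₁n = ℓ₂m} τ(n)τ(m)/(nm)^{1/2+s}` factorizes as
`f(ℓ₁ℓ₂;1+2s)/(ℓ₁ℓ₂)^{1/2+s} · ζ(1+2s)⁴/ζ(2+4s)`, where `f(·;w)` is the multiplicative
function supported on cubefree integers with the indicated values on `p` and `p²`. -/
theorem diagonal_series_factorization
    (ℓ₁ ℓ₂ : ℕ) (hℓ₁ : 0 < ℓ₁) (hℓ₂ : 0 < ℓ₂)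
    (hcop : Nat.Coprime ℓ₁ ℓ₂)
    (hcube : ∀ p : ℕ, p.Prime → ¬ p ^ 3 ∣ ℓ₁ * ℓ₂)
    (s : ℂ) (hs : 0 < s.re)
    (f : ℕ → ℂ → ℂ)
    (hf1 : ∀ w : ℂ, f 1 w = 1)
    (hfmul : ∀ m n : ℕ, Nat.Coprime m n → ∀ w : ℂ, f (m * n) w = f m w * f n w)
    (hfp : ∀ p : ℕ, p.Prime → ∀ w : ℂ, f p w = 2 / (1 + (p : ℂ) ^ (-w)))
    (hfp2 : ∀ p : ℕ, p.Prime → ∀ w : ℂ,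
      f (p ^ 2) w = (3 - (p : ℂ) ^ (-w)) / (1 + (p : ℂ) ^ (-w)))
    (hfpj : ∀ p : ℕ, p.Prime → ∀ j : ℕ, 3 ≤ j → ∀ w : ℂ, f (p ^ j) w = 0) :
    (∑' n : ℕ, ∑' m : ℕ,
        (if ℓ₁ * n = ℓ₂ * m then
          ((tau n : ℂ) * (tau m : ℂ)) / (((n * m : ℕ) : ℂ) ^ ((1 : ℂ) / 2 + s)) else 0))
      = f (ℓ₁ * ℓ₂) (1 + 2 * s) / (((ℓ₁ * ℓ₂ : ℕ) : ℂ) ^ ((1 : ℂ) / 2 + s))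
        * (riemannZeta (1 + 2 * s)) ^ 4 / riemannZeta (2 + 4 * s) := by
  have hl1 : ℓ₁ ≠ 0 := hℓ₁.ne'
  have hl2 : ℓ₂ ≠ 0 := hℓ₂.ne'
  have hL0 : ℓ₁ * ℓ₂ ≠ 0 := mul_ne_zero hl1 hl2
  set z : ℂ := (1 : ℂ) / 2 + s with hz
  set w : ℂ := 1 + 2 * s with hw
  have hwre : 1 < w.re := by
    have : w.re = 1 + 2 * s.re := by
      rw [hw]
      simp [Complex.add_re, Complex.mul_re]
    rw [this]
    linarith
  -- Step 1: collapse the inner sum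
  have hH : ∀ n : ℕ,
      (∑' m : ℕ, (if ℓ₁ * n = ℓ₂ * m then
        ((tau n : ℂ) * (tau m : ℂ)) / (((n * m : ℕ) : ℂ) ^ z) else 0))
      = if ℓ₂ ∣ n then
          ((tau n : ℂ) * (tau (ℓ₁ * (n / ℓ₂)) : ℂ)) /
            (((n * (ℓ₁ * (n / ℓ₂)) : ℕ) : ℂ) ^ z) else 0 := by
    intro n
    by_cases hdvd : ℓ₂ ∣ n
    · rw [if_pos hdvd]
      obtain ⟨k, rfl⟩ := hdvd
      rw [Nat.mul_div_cancel_left k hℓ₂]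
      rw [tsum_eq_single (ℓ₁ * k) ?_]
      · rw [if_pos (by ring)]
      · intro m' hm'
        rw [if_neg]
        intro hcond
        refine hm' (mul_left_cancel₀ hl2 ?_)
        rw [← hcond]
        ring
    · rw [if_neg hdvd]
      have hzero : ∀ m : ℕ, (if ℓ₁ * n = ℓ₂ * m then
          ((tau n : ℂ) * (tau m : ℂ)) / (((n * m : ℕ) : ℂ) ^ z) else 0) = 0 := by
        intro m
        rw [if_neg]
        intro hcond
        exact hdvd (Nat.Coprime.dvd_of_dvd_mul_left hcop.symm ⟨m, hcond⟩)
      rw [tsum_congr hzero]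
      exact tsum_zero
  rw [tsum_congr hH]
  -- Step 2: reindex over multiples of ℓ₂
  have hinj : Function.Injective (fun k : ℕ => ℓ₂ * k) := fun a b h => mul_left_cancel₀ hl2 h
  have hsupp : Function.support (fun n => if ℓ₂ ∣ n then
      ((tau n : ℂ) * (tau (ℓ₁ * (n / ℓ₂)) : ℂ)) /
        (((n * (ℓ₁ * (n / ℓ₂)) : ℕ) : ℂ) ^ z) else 0) ⊆
      Set.range (fun k : ℕ => ℓ₂ * k) := by
    intro n hn
    by_cases hdvd : ℓ₂ ∣ n
    · obtain ⟨k, hk⟩ := hdvd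
      exact ⟨k, hk.symm⟩
    · rw [Function.mem_support, if_neg hdvd] at hn
      exact absurd rfl hn
  rw [← Function.Injective.tsum_eq hinj hsupp]
  -- Step 3: per-term identification
  have hterm : ∀ k : ℕ, (if ℓ₂ ∣ ℓ₂ * k then
        ((tau (ℓ₂ * k) : ℂ) * (tau (ℓ₁ * ((ℓ₂ * k) / ℓ₂)) : ℂ)) /
          ((((ℓ₂ * k) * (ℓ₁ * ((ℓ₂ * k) / ℓ₂)) : ℕ) : ℂ) ^ z) else 0)
      = ((tau ℓ₂ * tau ℓ₁ : ℕ) : ℂ) * (((ℓ₁ * ℓ₂ : ℕ) : ℂ)) ^ (-z) *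
        (if k = 0 then 0 else
          ((tau (ℓ₂ * k) * tau (ℓ₁ * k) : ℕ) : ℂ) / ((tau ℓ₂ * tau ℓ₁ : ℕ) : ℂ)
            * (k : ℂ) ^ (-w)) := by
    intro k
    rw [if_pos (Dvd.intro k rfl), Nat.mul_div_cancel_left k hℓ₂]
    rcases eq_or_ne k 0 with rfl | hk
    · rw [if_pos rfl]
      have h0 : tau (ℓ₂ * 0) = 0 := by
        rw [mul_zero]
        simp [tau]
      rw [h0]
      push_cast
      rw [zero_mul, zero_div, mul_zero]
    · rw [if_neg hk]
      have hkC : (k : ℂ) ≠ 0 := Nat.cast_ne_zero.mpr hk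
      have hLC : ((ℓ₁ * ℓ₂ : ℕ) : ℂ) ≠ 0 := Nat.cast_ne_zero.mpr hL0
      have hsplit : ((((ℓ₂ * k) * (ℓ₁ * k) : ℕ)) : ℂ) ^ z
          = ((ℓ₁ * ℓ₂ : ℕ) : ℂ) ^ z * (k : ℂ) ^ w := by
        have h1 : (((ℓ₂ * k) * (ℓ₁ * k) : ℕ)) = (ℓ₁ * ℓ₂) * (k * k) := by ring
        rw [h1, natCast_mul_cpow (ℓ₁ * ℓ₂) (k * k) z, natCast_mul_cpow k k z,
          ← Complex.cpow_add _ _ hkC, show z + z = w by rw [hz, hw]; ring]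
      rw [hsplit]
      have ht2 : ((tau ℓ₂ : ℕ) : ℂ) ≠ 0 := Nat.cast_ne_zero.mpr (tau_pos hl2).ne'
      have ht1 : ((tau ℓ₁ : ℕ) : ℂ) ≠ 0 := Nat.cast_ne_zero.mpr (tau_pos hl1).ne'
      have hLz : ((ℓ₁ * ℓ₂ : ℕ) : ℂ) ^ z ≠ 0 := cpow_ne_zero' hLC z
      have hkw : (k : ℂ) ^ w ≠ 0 := cpow_ne_zero' hkC w
      rw [Complex.cpow_neg, Complex.cpow_neg]
      have hb : ((tau ℓ₂ * tau ℓ₁ : ℕ) : ℂ) ≠ 0 := by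
        have := Nat.mul_pos (tau_pos hl2) (tau_pos hl1)
        exact_mod_cast this.ne'
      have hXsplit : ((tau (ℓ₂ * k) * tau (ℓ₁ * k) : ℕ) : ℂ)
          = ((tau (ℓ₂ * k) : ℕ) : ℂ) * ((tau (ℓ₁ * k) : ℕ) : ℂ) := by push_cast; rfl
      rw [div_eq_mul_inv, div_eq_mul_inv, mul_inv, hXsplit]
      rw [show ((tau ℓ₂ * tau ℓ₁ : ℕ) : ℂ) * (((ℓ₁ * ℓ₂ : ℕ) : ℂ) ^ z)⁻¹ *
          (((tau (ℓ₂ * k) : ℕ) : ℂ) * ((tau (ℓ₁ * k) : ℕ) : ℂ) *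
            (((tau ℓ₂ * tau ℓ₁ : ℕ) : ℂ))⁻¹ * ((k : ℂ) ^ w)⁻¹)
          = (((tau ℓ₂ * tau ℓ₁ : ℕ) : ℂ) * (((tau ℓ₂ * tau ℓ₁ : ℕ) : ℂ))⁻¹) *
            (((tau (ℓ₂ * k) : ℕ) : ℂ) * ((tau (ℓ₁ * k) : ℕ) : ℂ) *
              ((((ℓ₁ * ℓ₂ : ℕ) : ℂ) ^ z)⁻¹ * (((k : ℂ) ^ w))⁻¹)) from by ring,
        mul_inv_cancel₀ hb, one_mul]
  rw [tsum_congr hterm, tsum_mul_left]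
  -- Step 4: apply the core series identity
  have hcore := core_series ℓ₁ ℓ₂ hℓ₁ hℓ₂ hcop hcube w hwre f hf1 hfmul hfp hfp2
  rw [mul_comm ((tau ℓ₂ * tau ℓ₁ : ℕ) : ℂ) (((ℓ₁ * ℓ₂ : ℕ) : ℂ) ^ (-z)), mul_assoc, hcore]
  rw [show (2 : ℂ) + 4 * s = 2 * w by rw [hw]; ring]
  rw [Complex.cpow_neg, div_eq_mul_inv, div_eq_mul_inv]
  ring
end

section
/- For every complex s with Re(s) > 1, ∑_{n≥1} τ(n)²/n^s = ζ(s)⁴/ζ(2s). -/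
open Complex

namespace TauSqAux

open ArithmeticFunction LSeries Finset

/-- The squarefree indicator function. -/
noncomputable def sqf : ArithmeticFunction ℂ :=
  ⟨fun n => if Squarefree n then 1 else 0, by simp [not_squarefree_zero]⟩

/-- The indicator function of squares. -/
noncomputable def qsq : ArithmeticFunction ℂ :=
  ⟨fun n => if n = 0 then 0 else if IsSquare n then 1 else 0, rfl⟩

/-- τ² as an arithmetic function. -/
noncomputable def T : ArithmeticFunction ℂ :=
  ⟨fun n => (tau n : ℂ) ^ 2, by simp [tau]⟩

/-- The ζ arithmetic function with values in ℂ. -/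
noncomputable def Z : ArithmeticFunction ℂ := (ArithmeticFunction.zeta : ArithmeticFunction ℕ)

lemma sqf_apply (n : ℕ) : sqf n = if Squarefree n then 1 else 0 := rfl

lemma qsq_apply (n : ℕ) : qsq n = if n = 0 then 0 else if IsSquare n then 1 else 0 := rfl

lemma T_apply (n : ℕ) : T n = (tau n : ℂ) ^ 2 := rfl

lemma Z_apply_ne {n : ℕ} (hn : n ≠ 0) : Z n = 1 := by
  simp [Z, natCoe_apply, zeta_apply, hn]

lemma isMult_sqf : sqf.IsMultiplicative := by
  refine ⟨by simp [sqf_apply], fun {m n} h => ?_⟩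
  simp only [sqf_apply, Nat.squarefree_mul h]
  by_cases h1 : Squarefree m <;> by_cases h2 : Squarefree n <;> simp [h1, h2]

lemma isSquare_mul_iff {m n : ℕ} (hm : m ≠ 0) (hn : n ≠ 0) (h : m.Coprime n) :
    IsSquare (m * n) ↔ IsSquare m ∧ IsSquare n := by
  constructor
  · rintro ⟨c, hc⟩
    have hc2 : m * n = c ^ 2 := by rw [hc, sq]
    have hum : IsUnit (gcd m n) := Nat.isUnit_iff.mpr h
    have hun : IsUnit (gcd n m) := Nat.isUnit_iff.mpr h.symm
    obtain ⟨d, hd⟩ := exists_eq_pow_of_mul_eq_pow hum hc2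
    obtain ⟨e, he⟩ := exists_eq_pow_of_mul_eq_pow hun (by rw [mul_comm]; exact hc2)
    exact ⟨⟨d, by rw [hd, sq]⟩, ⟨e, by rw [he, sq]⟩⟩
  · rintro ⟨⟨a, rfl⟩, ⟨b, rfl⟩⟩
    exact ⟨a * b, by ring⟩

lemma isMult_qsq : qsq.IsMultiplicative := by
  refine ⟨by simp [qsq_apply], fun {m n} h => ?_⟩
  rcases eq_or_ne m 0 with rfl | hm
  · have hn1 : n = 1 := by simpa using h
    simp [qsq_apply, hn1]
  rcases eq_or_ne n 0 with rfl | hn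
  · have hm1 : m = 1 := by simpa using h
    simp [qsq_apply, hm1]
  simp only [qsq_apply, if_neg (mul_ne_zero hm hn), if_neg hm, if_neg hn,
    isSquare_mul_iff hm hn h]
  by_cases h1 : IsSquare m <;> by_cases h2 : IsSquare n <;> simp [h1, h2]

lemma isMult_T : T.IsMultiplicative := by
  refine ⟨by simp [T_apply, tau], fun {m n} h => ?_⟩
  simp only [T_apply, tau]
  rw [Nat.Coprime.card_divisors_mul h]
  push_cast
  ring

lemma isMult_Z : Z.IsMultiplicative := isMultiplicative_zeta.natCast

/-- Convolution at a prime power. -/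
lemma mul_apply_prime_pow (f g : ArithmeticFunction ℂ) {p : ℕ} (hp : p.Prime) (k : ℕ) :
    (f * g) (p ^ k) = ∑ i ∈ range (k + 1), f (p ^ i) * g (p ^ (k - i)) := by
  rw [mul_apply, Nat.sum_divisorsAntidiagonal (f := fun a b => f a * g b),
    Nat.sum_divisors_prime_pow hp]
  refine Finset.sum_congr rfl fun i hi => ?_
  have hik : i ≤ k := by simpa using Nat.lt_succ_iff.mp (Finset.mem_range.mp hi)
  rw [Nat.pow_div hik hp.pos]

lemma sqf_prime_pow {p : ℕ} (hp : p.Prime) (i : ℕ) :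
    sqf (p ^ i) = if i ≤ 1 then 1 else 0 := by
  rcases Nat.eq_or_lt_of_le (Nat.zero_le i) with rfl | hi
  · simp [sqf_apply]
  rw [sqf_apply]
  simp only [Nat.squarefree_pow_iff hp.ne_one (show i ≠ 0 by omega)]
  rcases eq_or_ne i 1 with rfl | hi1
  · simp [hp.squarefree]
  · rw [if_neg (show ¬ i ≤ 1 by omega)]
    simp [hi1]

lemma isSquare_prime_pow_iff {p : ℕ} (hp : p.Prime) (i : ℕ) :
    IsSquare (p ^ i) ↔ Even i := by
  constructor
  · rintro ⟨c, hc⟩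
    have hc0 : c ≠ 0 := by
      rintro rfl
      simp only [mul_zero] at hc
      exact (pow_ne_zero i hp.pos.ne') hc
    have h1 : (p ^ i).factorization p = i := by
      rw [Nat.Prime.factorization_pow hp, Finsupp.single_eq_same]
    have h2 : (p ^ i).factorization p = c.factorization p + c.factorization p := by
      rw [hc, Nat.factorization_mul hc0 hc0, Finsupp.add_apply]
    rw [← h1, h2]
    exact ⟨_, rfl⟩
  · rintro ⟨j, rfl⟩
    exact ⟨p ^ j, by rw [← pow_add]⟩

lemma qsq_prime_pow {p : ℕ} (hp : p.Prime) (i : ℕ) :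
    qsq (p ^ i) = if Even i then 1 else 0 := by
  rw [qsq_apply, if_neg (pow_ne_zero i hp.pos.ne')]
  simp only [isSquare_prime_pow_iff hp]

/-- Convolution with `sqf` at a prime power `p^k`, `k ≠ 0`. -/
lemma sqf_mul_apply (g : ArithmeticFunction ℂ) {p : ℕ} (hp : p.Prime) {k : ℕ} (hk : k ≠ 0) :
    (sqf * g) (p ^ k) = g (p ^ k) + g (p ^ (k - 1)) := by
  rw [mul_apply_prime_pow sqf g hp k]
  have hsub : range 2 ⊆ range (k + 1) := Finset.range_subset_range.mpr (by omega)
  rw [← Finset.sum_subset hsub ?van]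
  · rw [Finset.sum_range_succ, Finset.sum_range_one]
    have h0 : sqf (p ^ 0) = 1 := by rw [sqf_prime_pow hp]; norm_num
    have h1 : sqf (p ^ 1) = 1 := by rw [sqf_prime_pow hp]; norm_num
    rw [h0, h1, one_mul, one_mul, Nat.sub_zero]
  case van =>
    intro x _ hx2
    have hx : ¬ x ≤ 1 := by
      intro h
      exact hx2 (Finset.mem_range.mpr (by omega))
    rw [sqf_prime_pow hp, if_neg hx, zero_mul]

/-- Key identity 1: `μ² ∗ [square] = 1`. -/
lemma sqf_mul_qsq : sqf * qsq = Z := by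
  rw [ArithmeticFunction.IsMultiplicative.eq_iff_eq_on_prime_powers _ (isMult_sqf.mul isMult_qsq) _ isMult_Z]
  intro p k hp
  rw [Z_apply_ne (pow_ne_zero k hp.pos.ne')]
  rcases eq_or_ne k 0 with rfl | hk
  · simp [isMult_sqf.mul isMult_qsq]
  rw [sqf_mul_apply qsq hp hk, qsq_prime_pow hp, qsq_prime_pow hp]
  have h1 : 1 ≤ k := Nat.one_le_iff_ne_zero.mpr hk
  have : Even (k - 1) ↔ ¬ Even k := by
    rw [Nat.even_sub h1]
    simp [Nat.even_iff]
    try omega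
  rcases Nat.even_or_odd k with he | ho
  · rw [if_pos he, if_neg (this.not_left.mpr (by simpa using he))]
    ring
  · have hne : ¬ Even k := Nat.not_even_iff_odd.mpr ho
    rw [if_neg hne, if_pos (this.mpr hne)]
    ring

lemma ZZ_prime_pow {p : ℕ} (hp : p.Prime) (k : ℕ) :
    (Z * Z) (p ^ k) = (k : ℂ) + 1 := by
  rw [mul_apply_prime_pow Z Z hp k]
  have : ∀ i ∈ range (k + 1), Z (p ^ i) * Z (p ^ (k - i)) = 1 := fun i _ => by
    rw [Z_apply_ne (pow_ne_zero _ hp.pos.ne'), Z_apply_ne (pow_ne_zero _ hp.pos.ne'), mul_one]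
  rw [Finset.sum_congr rfl this]
  simp

lemma ZZZ_prime_pow {p : ℕ} (hp : p.Prime) (k : ℕ) :
    (Z * Z * Z) (p ^ k) * 2 = ((k : ℂ) + 1) * ((k : ℂ) + 2) := by
  rw [mul_apply_prime_pow (Z * Z) Z hp k]
  have : ∀ i ∈ range (k + 1), (Z * Z) (p ^ i) * Z (p ^ (k - i)) = (i : ℂ) + 1 := fun i _ => by
    rw [ZZ_prime_pow hp, Z_apply_ne (pow_ne_zero _ hp.pos.ne'), mul_one]
  rw [Finset.sum_congr rfl this, Finset.sum_add_distrib]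
  simp only [Finset.sum_const, Finset.card_range, nsmul_eq_mul, mul_one]
  rw [← Nat.cast_sum]
  have hgauss : ((∑ x ∈ range (k + 1), x : ℕ) : ℂ) * 2 = (((k + 1) * k : ℕ) : ℂ) := by
    exact_mod_cast congrArg (fun n : ℕ => (n : ℂ)) (Finset.sum_range_id_mul_two (k + 1))
  rw [add_mul, hgauss]
  push_cast
  ring

/-- Key identity 2: `τ² = 1 ∗ 1 ∗ 1 ∗ μ²`. -/
lemma T_eq : T = sqf * (Z * Z * Z) := by
  rw [ArithmeticFunction.IsMultiplicative.eq_iff_eq_on_prime_powers _ isMult_T _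
    (isMult_sqf.mul ((isMult_Z.mul isMult_Z).mul isMult_Z))]
  intro p k hp
  have htau : tau (p ^ k) = k + 1 := by
    rw [tau, Nat.divisors_prime_pow hp, Finset.card_map, Finset.card_range]
  rcases eq_or_ne k 0 with rfl | hk
  · simp [T_apply, tau, isMult_sqf.mul ((isMult_Z.mul isMult_Z).mul isMult_Z)]
  have h2 : (2 : ℂ) ≠ 0 := two_ne_zero
  have key : T (p ^ k) * 2 = (sqf * (Z * Z * Z)) (p ^ k) * 2 := by
    rw [sqf_mul_apply _ hp hk, add_mul, ZZZ_prime_pow hp, ZZZ_prime_pow hp,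
      T_apply, htau]
    obtain ⟨j, rfl⟩ : ∃ j, k = j + 1 := ⟨k - 1, by omega⟩
    simp only [Nat.add_sub_cancel]
    push_cast
    ring
  exact mul_right_cancel₀ h2 key

end TauSqAux

open TauSqAux ArithmeticFunction LSeries in
/-- For `Re s > 1`, `∑_{n≥1} τ(n)²/n^s = ζ(s)⁴/ζ(2s)`. -/
theorem tau_sq_dirichlet_series (s : ℂ) (hs : 1 < s.re) :
    ∑' n : ℕ, ((tau n : ℂ) ^ 2 / (n : ℂ) ^ s)
      = (riemannZeta s) ^ 4 / riemannZeta (2 * s) := by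
  have h2s : 1 < (2 * s).re := by
    have h : (2 * s).re = 2 * s.re := by simp [Complex.mul_re]
    rw [h]; linarith
  have hZcoe : ⇑Z = fun n : ℕ => ((ArithmeticFunction.zeta n : ℕ) : ℂ) := by
    funext n; simp [Z, natCoe_apply]
  have hZsum : LSeriesSummable (⇑Z) s := by
    rw [hZcoe]; exact LSeriesSummable_zeta_iff.mpr hs
  have hsqf_sum : LSeriesSummable (⇑sqf) s :=
    LSeriesSummable_of_bounded_of_one_lt_re (m := 1) (fun n _ => by
      rw [sqf_apply]; split <;> simp) hs
  have hqsq_sum : LSeriesSummable (⇑qsq) s :=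
    LSeriesSummable_of_bounded_of_one_lt_re (m := 1) (fun n _ => by
      rw [qsq_apply]
      split
      · simp
      · split <;> simp) hs
  have hLZ : LSeries (⇑Z) s = riemannZeta s := by
    rw [hZcoe]; exact LSeries_zeta_eq_riemannZeta hs
  -- the L-series of the indicator of squares is ζ(2s)
  have hqsq : LSeries (⇑qsq) s = riemannZeta (2 * s) := by
    have hz : LSeriesHasSum (fun n : ℕ => ((ArithmeticFunction.zeta n : ℕ) : ℂ)) (2 * s) (riemannZeta (2 * s)) :=
      LSeriesHasSum_zeta h2s
    have hinj : Function.Injective (fun m : ℕ => m ^ 2) :=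
      fun a b hab => Nat.pow_left_injective two_ne_zero hab
    have hvan : ∀ n ∉ Set.range (fun m : ℕ => m ^ 2), LSeries.term (⇑qsq) s n = 0 := by
      intro n hn
      have hn0 : n ≠ 0 := by rintro rfl; exact hn ⟨0, by simp⟩
      rw [LSeries.term_of_ne_zero hn0, qsq_apply, if_neg hn0, if_neg, zero_div]
      rintro ⟨c, rfl⟩
      exact hn ⟨c, sq c⟩
    have hcomp : (LSeries.term (⇑qsq) s) ∘ (fun m : ℕ => m ^ 2)
        = LSeries.term (fun n : ℕ => ((ArithmeticFunction.zeta n : ℕ) : ℂ)) (2 * s) := by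
      funext m
      rcases eq_or_ne m 0 with rfl | hm
      · simp
      have hm2 : m ^ 2 ≠ 0 := pow_ne_zero _ hm
      simp only [Function.comp_apply, LSeries.term_of_ne_zero hm2, LSeries.term_of_ne_zero hm]
      rw [qsq_apply, if_neg hm2, if_pos ⟨m, sq m⟩, zeta_apply, if_neg hm]
      have hcast : ((m ^ 2 : ℕ) : ℂ) ^ s = (m : ℂ) ^ (2 * s) := by
        push_cast
        rw [pow_two, natCast_mul_natCast_cpow, ← cpow_add _ _ (Nat.cast_ne_zero.mpr hm),
          ← two_mul]
      rw [hcast]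
      norm_num
    have hHS : HasSum (LSeries.term (⇑qsq) s) (riemannZeta (2 * s)) :=
      (Function.Injective.hasSum_iff hinj hvan).mp (by rw [hcomp]; exact hz)
    exact hHS.tsum_eq
  -- ζ(s) = L(sqf) * ζ(2s)
  have hkey : riemannZeta s = LSeries (⇑sqf) s * riemannZeta (2 * s) := by
    rw [← hLZ, ← sqf_mul_qsq, ← hqsq]
    exact ArithmeticFunction.LSeries_mul' hsqf_sum hqsq_sum
  -- the goal as an L-series
  have hgoal : ∑' n : ℕ, ((tau n : ℂ) ^ 2 / (n : ℂ) ^ s) = LSeries (⇑T) s := by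
    refine tsum_congr fun n => ?_
    rcases eq_or_ne n 0 with rfl | hn
    · simp [tau]
    · rw [LSeries.term_of_ne_zero hn, T_apply]
  rw [hgoal, show (⇑T : ℕ → ℂ) = ⇑(sqf * (Z * Z * Z)) by rw [T_eq]]
  have hZZZsum : LSeriesSummable (⇑(Z * Z * Z)) s :=
    ArithmeticFunction.LSeriesSummable_mul (ArithmeticFunction.LSeriesSummable_mul hZsum hZsum)
      hZsum
  rw [ArithmeticFunction.LSeries_mul' hsqf_sum hZZZsum,
    ArithmeticFunction.LSeries_mul' (ArithmeticFunction.LSeriesSummable_mul hZsum hZsum) hZsum,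
    ArithmeticFunction.LSeries_mul' hZsum hZsum, hLZ]
  have hz2 : riemannZeta (2 * s) ≠ 0 := riemannZeta_ne_zero_of_one_lt_re h2s
  rw [eq_div_iff hz2]
  linear_combination (-(riemannZeta s ^ 3)) * hkey
end
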